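/- arXiv:2410.15824 — 4 statements merged into one kernel-verified Lean document; each statement's English description precedes it below -/
import Mathlib

section
/- Let X₁ and X₂ be independent nonnegative random variables, each regularly varying at infinity with the same index α > 0, i.e. P[Xᵢ > x] = x^{-α} Lᵢ(x) for slowly varying Lᵢ. Then P[X₁ − X₂ > x] ∼ P[X₁ > x] as x → ∞, and P[X₁ − X₂ < −x] ∼ P[X₂ > x] as x → ∞. -/
open MeasureTheory Filter

/-- `L` is slowly varying at `+∞`. -/
def SlowlyVarying (L : ℝ → ℝ) : Prop :=
  ∀ t : ℝ, 0 < t → Tendsto (fun x => L (t * x) / L x) atTop (nhds 1)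

/-- Key one-sided lemma: the tail of `X₁ - X₂` is equivalent to the tail of `X₁`. -/
lemma tail_sub_aux {Ω : Type*} [MeasurableSpace Ω] (μ : Measure Ω) [IsProbabilityMeasure μ]
    (X₁ X₂ : Ω → ℝ) (hX₂m : Measurable X₂)
    (hX₂nn : ∀ ω, 0 ≤ X₂ ω)
    (hindep : ProbabilityTheory.IndepFun X₁ X₂ μ)
    (α : ℝ) (hα : 0 < α) (L₁ : ℝ → ℝ) (hL₁ : SlowlyVarying L₁)
    (hT₁ : ∀ x : ℝ, 0 < x → (μ {ω | x < X₁ ω}).toReal = x ^ (-α) * L₁ x)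
    (hpos₁ : ∀ x : ℝ, 0 < x → 0 < (μ {ω | x < X₁ ω}).toReal) :
    Tendsto (fun x : ℝ =>
        (μ {ω | x < X₁ ω - X₂ ω}).toReal / (μ {ω | x < X₁ ω}).toReal)
      atTop (nhds 1) := by
  -- The tail of `X₂` tends to `0`.
  have htail : Tendsto (fun y : ℝ => (μ {ω | y < X₂ ω}).toReal) atTop (nhds 0) := by
    have h1 : Tendsto (fun y : ℝ => μ {ω | y < X₂ ω}) atTop
        (nhds (μ (⋂ y : ℝ, {ω | y < X₂ ω}))) := by
      refine tendsto_measure_iInter_atTop (fun y => ?_) (fun a b hab ω h => lt_of_le_of_lt hab h)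
        ⟨0, measure_ne_top μ _⟩
      exact (hX₂m measurableSet_Ioi).nullMeasurableSet
    have h2 : (⋂ y : ℝ, {ω | y < X₂ ω}) = (∅ : Set Ω) := by
      ext ω
      simp only [Set.mem_iInter, Set.mem_setOf_eq, Set.mem_empty_iff_false, iff_false, not_forall,
        not_lt]
      exact ⟨X₂ ω, le_rfl⟩
    rw [h2, measure_empty] at h1
    have h3 := (ENNReal.tendsto_toReal (show (0 : ENNReal) ≠ ⊤ by simp)).comp h1
    simpa [Function.comp_def] using h3
  -- Positivity of `L₁`.
  have hLpos : ∀ x : ℝ, 0 < x → 0 < L₁ x := by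
    intro x hx
    have h := hpos₁ x hx
    rw [hT₁ x hx] at h
    have hxp : (0 : ℝ) < x ^ (-α) := Real.rpow_pos_of_pos hx _
    rcases mul_pos_iff.mp h with ⟨_, h2⟩ | ⟨h2, _⟩
    · exact h2
    · linarith
  -- Upper bound: `{x < X₁ - X₂} ⊆ {x < X₁}` since `X₂ ≥ 0`.
  have hup : ∀ x : ℝ, (μ {ω | x < X₁ ω - X₂ ω}).toReal ≤ (μ {ω | x < X₁ ω}).toReal := by
    intro x
    refine ENNReal.toReal_mono (measure_ne_top μ _) (measure_mono fun ω h => ?_)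
    have := hX₂nn ω
    simp only [Set.mem_setOf_eq] at h ⊢
    linarith
  -- Key lower bound via independence.
  have hkey : ∀ ε x : ℝ, 0 < ε →
      (μ {ω | (1 + ε) * x < X₁ ω}).toReal * (1 - (μ {ω | ε * x < X₂ ω}).toReal)
        ≤ (μ {ω | x < X₁ ω - X₂ ω}).toReal := by
    intro ε x hε
    have hmeas : μ (X₁ ⁻¹' Set.Ioi ((1 + ε) * x) ∩ X₂ ⁻¹' Set.Iic (ε * x))
        = μ (X₁ ⁻¹' Set.Ioi ((1 + ε) * x)) * μ (X₂ ⁻¹' Set.Iic (ε * x)) :=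
      hindep.measure_inter_preimage_eq_mul _ _ measurableSet_Ioi measurableSet_Iic
    have hIic : (μ (X₂ ⁻¹' Set.Iic (ε * x))).toReal = 1 - (μ {ω | ε * x < X₂ ω}).toReal := by
      have hc : X₂ ⁻¹' Set.Iic (ε * x) = {ω | ε * x < X₂ ω}ᶜ := by
        ext ω; simp [not_lt]
      rw [hc, prob_compl_eq_one_sub
          (show MeasurableSet {ω | ε * x < X₂ ω} from hX₂m measurableSet_Ioi),
        ENNReal.toReal_sub_of_le prob_le_one (by simp)]
      simp
    have hincl : X₁ ⁻¹' Set.Ioi ((1 + ε) * x) ∩ X₂ ⁻¹' Set.Iic (ε * x)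
        ⊆ {ω | x < X₁ ω - X₂ ω} := by
      rintro ω ⟨h1, h2⟩
      simp only [Set.mem_preimage, Set.mem_Ioi, Set.mem_Iic] at h1 h2
      simp only [Set.mem_setOf_eq]
      have : (1 + ε) * x = x + ε * x := by ring
      linarith
    calc (μ {ω | (1 + ε) * x < X₁ ω}).toReal * (1 - (μ {ω | ε * x < X₂ ω}).toReal)
        = (μ (X₁ ⁻¹' Set.Ioi ((1 + ε) * x))).toReal * (μ (X₂ ⁻¹' Set.Iic (ε * x))).toReal := by
          rw [hIic]; rfl
      _ = (μ (X₁ ⁻¹' Set.Ioi ((1 + ε) * x) ∩ X₂ ⁻¹' Set.Iic (ε * x))).toReal := by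
          rw [hmeas, ENNReal.toReal_mul]
      _ ≤ (μ {ω | x < X₁ ω - X₂ ω}).toReal :=
          ENNReal.toReal_mono (measure_ne_top μ _) (measure_mono hincl)
  -- Limit of the ratio of tails of `X₁`.
  have hA : ∀ ε : ℝ, 0 < ε →
      Tendsto (fun x : ℝ =>
          (μ {ω | (1 + ε) * x < X₁ ω}).toReal / (μ {ω | x < X₁ ω}).toReal)
        atTop (nhds ((1 + ε) ^ (-α))) := by
    intro ε hε
    have h1ε : (0 : ℝ) < 1 + ε := by linarith
    have heq : (fun x : ℝ => (1 + ε) ^ (-α) * (L₁ ((1 + ε) * x) / L₁ x)) =ᶠ[atTop]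
        fun x : ℝ => (μ {ω | (1 + ε) * x < X₁ ω}).toReal / (μ {ω | x < X₁ ω}).toReal := by
      filter_upwards [eventually_gt_atTop (0 : ℝ)] with x hx
      have hεx : 0 < (1 + ε) * x := mul_pos h1ε hx
      rw [hT₁ _ hεx, hT₁ _ hx, Real.mul_rpow h1ε.le hx.le]
      have hxne : x ^ (-α) ≠ 0 := (Real.rpow_pos_of_pos hx _).ne'
      have hLne : L₁ x ≠ 0 := (hLpos x hx).ne'
      field_simp
    refine Tendsto.congr' heq ?_
    have h := (hL₁ (1 + ε) h1ε).const_mul ((1 + ε) ^ (-α))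
    simpa using h
  -- Final assembly.
  rw [Metric.tendsto_nhds]
  intro δ hδ
  -- choose `ε > 0` with `1 - δ < (1 + ε) ^ (-α)`
  have hcont : ContinuousAt (fun ε : ℝ => (1 + ε) ^ (-α)) 0 := by
    have h1 : ContinuousAt (fun y : ℝ => y ^ (-α)) ((fun ε : ℝ => 1 + ε) 0) := by
      simp only [add_zero]
      exact Real.continuousAt_rpow_const 1 (-α) (Or.inl one_ne_zero)
    exact h1.comp (by fun_prop)
  have hc1 : Tendsto (fun ε : ℝ => (1 + ε) ^ (-α)) (nhdsWithin 0 (Set.Ioi 0)) (nhds 1) := by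
    have h := hcont.tendsto
    simp only [add_zero, Real.one_rpow] at h
    exact h.mono_left nhdsWithin_le_nhds
  obtain ⟨ε, hε1, hε0⟩ :=
    ((hc1.eventually (eventually_gt_nhds (show 1 - δ < 1 by linarith))).and
      self_mem_nhdsWithin).exists
  have hεpos : 0 < ε := hε0
  -- tail of `X₂` along `ε * x`
  have ht2 : Tendsto (fun x : ℝ => (μ {ω | ε * x < X₂ ω}).toReal) atTop (nhds 0) := by
    have h := htail.comp (tendsto_id.const_mul_atTop hεpos)
    simpa [Function.comp_def] using h
  have hg : Tendsto (fun x : ℝ =>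
      (μ {ω | (1 + ε) * x < X₁ ω}).toReal / (μ {ω | x < X₁ ω}).toReal
        * (1 - (μ {ω | ε * x < X₂ ω}).toReal)) atTop (nhds ((1 + ε) ^ (-α))) := by
    have h := (hA ε hεpos).mul ((tendsto_const_nhds :
        Tendsto (fun _ : ℝ => (1 : ℝ)) atTop (nhds 1)).sub ht2)
    simpa using h
  have hev := hg.eventually (eventually_gt_nhds hε1)
  filter_upwards [hev, eventually_gt_atTop (0 : ℝ)] with x hgx hx
  have hT : 0 < (μ {ω | x < X₁ ω}).toReal := hpos₁ x hx
  have hle : (μ {ω | x < X₁ ω - X₂ ω}).toReal / (μ {ω | x < X₁ ω}).toReal ≤ 1 :=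
    div_le_one_of_le₀ (hup x) hT.le
  have hge : (μ {ω | (1 + ε) * x < X₁ ω}).toReal / (μ {ω | x < X₁ ω}).toReal
      * (1 - (μ {ω | ε * x < X₂ ω}).toReal)
      ≤ (μ {ω | x < X₁ ω - X₂ ω}).toReal / (μ {ω | x < X₁ ω}).toReal := by
    rw [div_mul_eq_mul_div]
    gcongr
    exact hkey ε x hεpos
  have hlt : 1 - δ < (μ {ω | x < X₁ ω - X₂ ω}).toReal / (μ {ω | x < X₁ ω}).toReal :=
    lt_of_lt_of_le hgx hge
  rw [Real.dist_eq, abs_lt]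
  constructor <;> linarith

/-- If `X₁, X₂` are independent nonnegative random variables, each regularly varying
at infinity with the same index `α > 0`, then
`P[X₁ − X₂ > x] ∼ P[X₁ > x]` and `P[X₁ − X₂ < −x] ∼ P[X₂ > x]` as `x → ∞`. -/
theorem tail_sub_of_regularly_varying
    {Ω : Type*} [MeasurableSpace Ω] (μ : Measure Ω) [IsProbabilityMeasure μ]
    (X₁ X₂ : Ω → ℝ) (hX₁m : Measurable X₁) (hX₂m : Measurable X₂)
    (hX₁nn : ∀ ω, 0 ≤ X₁ ω) (hX₂nn : ∀ ω, 0 ≤ X₂ ω)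
    (hindep : ProbabilityTheory.IndepFun X₁ X₂ μ)
    (α : ℝ) (hα : 0 < α) (L₁ L₂ : ℝ → ℝ)
    (hL₁ : SlowlyVarying L₁) (hL₂ : SlowlyVarying L₂)
    (hT₁ : ∀ x : ℝ, 0 < x → (μ {ω | x < X₁ ω}).toReal = x ^ (-α) * L₁ x)
    (hT₂ : ∀ x : ℝ, 0 < x → (μ {ω | x < X₂ ω}).toReal = x ^ (-α) * L₂ x)
    (hpos₁ : ∀ x : ℝ, 0 < x → 0 < (μ {ω | x < X₁ ω}).toReal)
    (hpos₂ : ∀ x : ℝ, 0 < x → 0 < (μ {ω | x < X₂ ω}).toReal) :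
    Tendsto (fun x : ℝ =>
        (μ {ω | x < X₁ ω - X₂ ω}).toReal / (μ {ω | x < X₁ ω}).toReal)
      atTop (nhds 1) ∧
    Tendsto (fun x : ℝ =>
        (μ {ω | X₁ ω - X₂ ω < -x}).toReal / (μ {ω | x < X₂ ω}).toReal)
      atTop (nhds 1) := by
  constructor
  · exact tail_sub_aux μ X₁ X₂ hX₂m hX₂nn hindep α hα L₁ hL₁ hT₁ hpos₁
  · have hset : ∀ x : ℝ, {ω | X₁ ω - X₂ ω < -x} = {ω | x < X₂ ω - X₁ ω} := by
      intro x
      ext ω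
      simp only [Set.mem_setOf_eq]
      constructor <;> intro h <;> linarith
    simp only [hset]
    exact tail_sub_aux μ X₂ X₁ hX₁m hX₁nn hindep.symm α hα L₂ hL₂ hT₂ hpos₂
end

section
/- Let X₁,…,Xₙ be independent nonnegative random variables, each regularly varying at infinity with the same index α ≥ 0 and with comparable tails. Then P[X₁ + ⋯ + Xₙ > x] ∼ Σᵢ P[Xᵢ > x] as x → ∞. -/
open MeasureTheory Filter
open Set in

theorem bonferroni_aux' {Ω : Type*} [MeasurableSpace Ω] (μ : Measure Ω) [IsFiniteMeasure μ]
    {ι : Type*} [DecidableEq ι] (A : ι → Set Ω) (hA : ∀ i, MeasurableSet (A i)) (s : Finset ι) :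
    (∑ i ∈ s, (μ (A i)).toReal)
      - ∑ i ∈ s, ∑ j ∈ s, (if i ≠ j then (μ (A i ∩ A j)).toReal else 0)
      ≤ (μ (⋃ i ∈ s, A i)).toReal := by
  classical
  induction s using Finset.cons_induction with
  | empty => simp
  | cons a s ha ih =>
    have hU : MeasurableSet (⋃ i ∈ s, A i) := by
      exact MeasurableSet.biUnion s.countable_toSet (fun i _ => hA i)
    have hkey : (μ (A a ∪ ⋃ i ∈ s, A i)).toReal
        = (μ (A a)).toReal + (μ (⋃ i ∈ s, A i)).toReal - (μ (A a ∩ ⋃ i ∈ s, A i)).toReal := by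
      have := measure_union_add_inter (μ := μ) (A a) hU
      have h1 : (μ (A a ∪ ⋃ i ∈ s, A i)).toReal + (μ (A a ∩ ⋃ i ∈ s, A i)).toReal
          = (μ (A a)).toReal + (μ (⋃ i ∈ s, A i)).toReal := by
        rw [← ENNReal.toReal_add (measure_ne_top _ _) (measure_ne_top _ _),
          ← ENNReal.toReal_add (measure_ne_top _ _) (measure_ne_top _ _), this]
      linarith
    have hsub : (μ (A a ∩ ⋃ i ∈ s, A i)).toReal ≤ ∑ i ∈ s, (μ (A a ∩ A i)).toReal := by
      rw [inter_iUnion₂]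
      refine le_trans (ENNReal.toReal_mono ?_ (measure_biUnion_finset_le s _)) ?_
      · exact (ENNReal.sum_lt_top.2 fun i _ => (measure_lt_top μ _)).ne
      · rw [ENNReal.toReal_sum (fun i _ => measure_ne_top _ _)]
    have hUcons : (⋃ i ∈ Finset.cons a s ha, A i) = A a ∪ ⋃ i ∈ s, A i := by
      simp [Finset.cons_eq_insert, Set.biUnion_insert]
    rw [hUcons, hkey]
    have hpair : ∑ i ∈ Finset.cons a s ha, ∑ j ∈ Finset.cons a s ha,
          (if i ≠ j then (μ (A i ∩ A j)).toReal else 0)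
        = (∑ i ∈ s, ∑ j ∈ s, (if i ≠ j then (μ (A i ∩ A j)).toReal else 0))
          + (∑ j ∈ s, (if a ≠ j then (μ (A a ∩ A j)).toReal else 0))
          + (∑ i ∈ s, (if i ≠ a then (μ (A i ∩ A a)).toReal else 0)) := by
      rw [Finset.sum_cons]
      rw [Finset.sum_cons]
      have : ∀ i ∈ s, ∑ j ∈ Finset.cons a s ha, (if i ≠ j then (μ (A i ∩ A j)).toReal else 0)
          = (if i ≠ a then (μ (A i ∩ A a)).toReal else 0)
            + ∑ j ∈ s, (if i ≠ j then (μ (A i ∩ A j)).toReal else 0) := by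
        intro i _; rw [Finset.sum_cons]
      rw [Finset.sum_congr rfl this, Finset.sum_add_distrib]
      simp
      ring
    rw [Finset.sum_cons, hpair]
    have h1 : ∑ j ∈ s, (if a ≠ j then (μ (A a ∩ A j)).toReal else 0)
        = ∑ j ∈ s, (μ (A a ∩ A j)).toReal := by
      refine Finset.sum_congr rfl fun j hj => ?_
      rw [if_pos]; rintro rfl; exact ha hj
    have h2 : 0 ≤ ∑ i ∈ s, (if i ≠ a then (μ (A i ∩ A a)).toReal else 0) := by
      refine Finset.sum_nonneg fun i _ => ?_
      split <;> [exact ENNReal.toReal_nonneg; exact le_rfl]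
    linarith

theorem big_jump_incl' {Ω : Type*} {n : ℕ} (X : Fin n → Ω → ℝ)
    {x δ : ℝ} (hx : 0 < x) (hδn : δ * n < 1) :
    {ω | x < ∑ i, X i ω} ⊆
      (⋃ i, {ω | (1 - (n - 1) * δ) * x < X i ω}) ∪
        (⋃ i, ⋃ j, ⋃ (_ : i ≠ j), ({ω | δ * x < X i ω} ∩ {ω | δ * x < X j ω})) := by
  classical
  intro ω hω
  simp only [Set.mem_setOf_eq] at hω
  by_contra hcon
  simp only [Set.mem_union, Set.mem_iUnion, Set.mem_inter_iff, Set.mem_setOf_eq, not_or,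
    not_exists, not_and] at hcon
  obtain ⟨h1, h2⟩ := hcon
  push_neg at h1
  set s : Finset (Fin n) := Finset.univ.filter (fun i => δ * x < X i ω) with hs
  have hcard : s.card ≤ 1 := by
    by_contra hc
    push_neg at hc
    obtain ⟨a, b, ha, hb, hab⟩ := Finset.one_lt_card_iff.1 hc
    rw [hs, Finset.mem_filter] at ha hb
    exact h2 a b hab ha.2 hb.2
  rcases s.eq_empty_or_nonempty with he | ⟨i0, hi0⟩
  · have hall : ∀ i, X i ω ≤ δ * x := by
      intro i
      by_contra hi
      push_neg at hi
      have : i ∈ s := by rw [hs, Finset.mem_filter]; exact ⟨Finset.mem_univ _, hi⟩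
      simp [he] at this
    have : ∑ i, X i ω ≤ n * (δ * x) := by
      calc ∑ i, X i ω ≤ ∑ _i : Fin n, δ * x := Finset.sum_le_sum fun i _ => hall i
        _ = n * (δ * x) := by simp [Finset.sum_const, nsmul_eq_mul]
    nlinarith
  · have hone : ∀ i ∈ s, i = i0 := by
      intro i hi
      exact Finset.card_le_one.1 hcard i hi i0 hi0
    have hrest : ∀ i, i ≠ i0 → X i ω ≤ δ * x := by
      intro i hi
      by_contra hxi
      push_neg at hxi
      exact hi (hone i (by rw [hs, Finset.mem_filter]; exact ⟨Finset.mem_univ _, hxi⟩))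
    have hsplit : ∑ i, X i ω = X i0 ω + ∑ i ∈ Finset.univ.erase i0, X i ω :=
      (Finset.add_sum_erase _ _ (Finset.mem_univ i0)).symm
    have hcarde : (Finset.univ.erase i0).card = n - 1 := by
      rw [Finset.card_erase_of_mem (Finset.mem_univ _), Finset.card_univ, Fintype.card_fin]
    have hbound : ∑ i ∈ Finset.univ.erase i0, X i ω ≤ (n - 1 : ℝ) * (δ * x) := by
      have := Finset.sum_le_card_nsmul (Finset.univ.erase i0) (fun i => X i ω) (δ * x)
        (fun i hi => hrest i (Finset.ne_of_mem_erase hi))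
      rw [hcarde, nsmul_eq_mul] at this
      have hn1 : ((n - 1 : ℕ) : ℝ) = (n : ℝ) - 1 := by
        have : 1 ≤ n := i0.pos
        push_cast [Nat.cast_sub this]
        ring
      rw [hn1] at this
      exact this
    have hi0b : X i0 ω ≤ (1 - (n - 1) * δ) * x := h1 i0
    nlinarith [hω, hsplit]


/-- If `X₁, …, Xₙ` are independent nonnegative random variables, each regularly
varying at infinity with the same index `α ≥ 0` and comparable tails
(`P[Xᵢ > x] = cᵢ x^{-α} L(x)`), then
`P[X₁ + ⋯ + Xₙ > x] ∼ Σᵢ P[Xᵢ > x]` as `x → ∞`. -/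
theorem tail_sum_of_regularly_varying
    {Ω : Type*} [MeasurableSpace Ω] (μ : Measure Ω) [IsProbabilityMeasure μ]
    (n : ℕ) (hn : 0 < n) (X : Fin n → Ω → ℝ)
    (hXm : ∀ i, Measurable (X i)) (hXnn : ∀ i ω, 0 ≤ X i ω)
    (hindep : ProbabilityTheory.iIndepFun X μ)
    (α : ℝ) (hα : 0 ≤ α) (L : ℝ → ℝ) (hL : SlowlyVarying L)
    (hLpos : ∀ x : ℝ, 0 < x → 0 < L x)
    (c : Fin n → ℝ) (hc : ∀ i, 0 < c i)
    (hT : ∀ i, ∀ x : ℝ, 0 < x → (μ {ω | x < X i ω}).toReal = c i * x ^ (-α) * L x) :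
    Tendsto (fun x : ℝ =>
        (μ {ω | x < ∑ i, X i ω}).toReal / ∑ i, (μ {ω | x < X i ω}).toReal)
      atTop (nhds 1) := by
  classical
  set C : ℝ := ∑ i, c i with hCdef
  have hCpos : 0 < C := Finset.sum_pos (fun i _ => hc i) ⟨⟨0, hn⟩, Finset.mem_univ _⟩
  set p : Fin n → ℝ → ℝ := fun i x => (μ {ω | x < X i ω}).toReal with hpdef
  set D : ℝ → ℝ := fun x => ∑ i, p i x with hDdef
  have hmeas : ∀ (i : Fin n) (x : ℝ), MeasurableSet {ω | x < X i ω} := by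
    intro i x
    exact (hXm i) measurableSet_Ioi
  have hDval : ∀ x : ℝ, 0 < x → D x = C * x ^ (-α) * L x := by
    intro x hx
    simp only [hDdef, hpdef]
    rw [Finset.sum_congr rfl (fun i _ => hT i x hx), hCdef]
    rw [Finset.sum_mul, Finset.sum_mul]
  have hDpos : ∀ x : ℝ, 0 < x → 0 < D x := by
    intro x hx
    rw [hDval x hx]
    exact mul_pos (mul_pos hCpos (Real.rpow_pos_of_pos hx _)) (hLpos x hx)
  -- each tail probability tends to 0
  have hptend0 : ∀ i, Tendsto (fun x => p i x) atTop (nhds 0) := by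
    intro i
    have hanti : Antitone (fun x : ℝ => {ω | x < X i ω}) := by
      intro a b hab ω hω
      exact lt_of_le_of_lt hab hω
    have h := tendsto_measure_iInter_atTop (μ := μ)
      (s := fun x : ℝ => {ω | x < X i ω})
      (fun x => (hmeas i x).nullMeasurableSet) hanti ⟨0, measure_ne_top μ _⟩
    have hempty : (⋂ x : ℝ, {ω | x < X i ω}) = ∅ := by
      ext ω
      simp only [Set.mem_iInter, Set.mem_setOf_eq, Set.mem_empty_iff_false, iff_false, not_forall,
        not_lt]
      exact ⟨X i ω, le_refl _⟩
    rw [hempty, measure_empty] at h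
    have := (ENNReal.tendsto_toReal (a := 0) (by simp)).comp h
    rw [ENNReal.toReal_zero] at this
    exact this
  -- ratio limits
  have hratio : ∀ t : ℝ, 0 < t → ∀ i,
      Tendsto (fun x => p i (t * x) / D x) atTop (nhds (c i / C * t ^ (-α))) := by
    intro t ht i
    have heq : ∀ᶠ x in atTop, (c i / C * t ^ (-α)) * (L (t * x) / L x) = p i (t * x) / D x := by
      filter_upwards [eventually_gt_atTop (0 : ℝ)] with x hx
      have htx : 0 < t * x := mul_pos ht hx
      simp only [hpdef]
      rw [hT i (t * x) htx, hDval x hx]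
      rw [Real.mul_rpow ht.le hx.le]
      have hLx := hLpos x hx
      have hxα : (0 : ℝ) < x ^ (-α) := Real.rpow_pos_of_pos hx _
      field_simp
    have hlim : Tendsto (fun x => (c i / C * t ^ (-α)) * (L (t * x) / L x)) atTop
        (nhds (c i / C * t ^ (-α))) := by
      have := (hL t ht).const_mul (c i / C * t ^ (-α))
      simpa using this
    exact hlim.congr' heq
  have hDratio : ∀ t : ℝ, 0 < t →
      Tendsto (fun x => (∑ i, p i (t * x)) / D x) atTop (nhds (t ^ (-α))) := by
    intro t ht
    have : Tendsto (fun x => ∑ i, p i (t * x) / D x) atTop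
        (nhds (∑ i, c i / C * t ^ (-α))) :=
      tendsto_finset_sum _ fun i _ => hratio t ht i
    have hsum : (∑ i, c i / C * t ^ (-α)) = t ^ (-α) := by
      rw [← Finset.sum_mul, ← Finset.sum_div, ← hCdef, div_self hCpos.ne', one_mul]
    rw [hsum] at this
    refine this.congr fun x => ?_
    rw [Finset.sum_div]
  -- cross terms vanish
  have hcross : ∀ t : ℝ, 0 < t →
      Tendsto (fun x => (∑ i, ∑ j, if i ≠ j then p i (t * x) * p j (t * x) else 0) / D x)
        atTop (nhds 0) := by
    intro t ht
    have hterm : ∀ i j : Fin n,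
        Tendsto (fun x => (if i ≠ j then p i (t * x) * p j (t * x) else 0) / D x)
          atTop (nhds 0) := by
      intro i j
      by_cases hij : i ≠ j
      · simp only [if_pos hij]
        have h1 := hratio t ht i
        have h2 : Tendsto (fun x => p j (t * x)) atTop (nhds 0) := by
          have hmul : Tendsto (fun x : ℝ => t * x) atTop atTop :=
            Tendsto.const_mul_atTop ht tendsto_id
          exact (hptend0 j).comp hmul
        have := h1.mul h2
        simp only [mul_zero] at this
        refine this.congr fun x => ?_
        ring
      · simp only [if_neg hij, zero_div]
        exact tendsto_const_nhds
    have := tendsto_finset_sum (Finset.univ : Finset (Fin n))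
      (fun i _ => tendsto_finset_sum (Finset.univ : Finset (Fin n)) (fun j _ => hterm i j))
    simp only [Finset.sum_const_zero] at this
    refine this.congr fun x => ?_
    rw [Finset.sum_div]
    refine Finset.sum_congr rfl fun i _ => ?_
    rw [Finset.sum_div]
  -- independence of pairs
  have hpairind : ∀ (i j : Fin n), i ≠ j → ∀ y : ℝ,
      (μ ({ω | y < X i ω} ∩ {ω | y < X j ω})).toReal = p i y * p j y := by
    intro i j hij y
    have hind := (hindep.indepFun hij).measure_inter_preimage_eq_mul
      (Set.Ioi y) (Set.Ioi y) measurableSet_Ioi measurableSet_Ioi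
    have hset1 : X i ⁻¹' (Set.Ioi y) = {ω | y < X i ω} := rfl
    have hset2 : X j ⁻¹' (Set.Ioi y) = {ω | y < X j ω} := rfl
    rw [hset1, hset2] at hind
    rw [hind, ENNReal.toReal_mul]
  -- main argument
  rw [Metric.tendsto_nhds]
  intro ε hε
  -- choose δ
  have hδexists : ∃ δ : ℝ, 0 < δ ∧ δ * n < 1 ∧
      (1 - (n - 1) * δ : ℝ) ^ (-α) < 1 + ε / 2 ∧ 0 < (1 - (n - 1) * δ : ℝ) := by
    have h1 : ContinuousAt (fun d : ℝ => 1 - ((n : ℝ) - 1) * d) 0 := by fun_prop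
    have hcont : ContinuousAt (fun d : ℝ => (1 - ((n : ℝ) - 1) * d) ^ (-α)) 0 :=
      h1.rpow_const (Or.inl (by norm_num))
    have hcont' : Tendsto (fun d : ℝ => (1 - ((n : ℝ) - 1) * d) ^ (-α)) (nhds 0)
        (nhds ((1 - ((n : ℝ) - 1) * 0) ^ (-α))) := hcont
    have hlt : ∀ᶠ d in nhds (0 : ℝ), (1 - ((n : ℝ) - 1) * d) ^ (-α) < 1 + ε / 2 := by
      refine hcont'.eventually_lt_const ?_
      have : ((1 : ℝ) - ((n : ℝ) - 1) * 0) ^ (-α) = 1 := by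
        norm_num
      rw [this]; linarith
    have hlt2 : ∀ᶠ d in nhds (0 : ℝ), d * (n : ℝ) < 1 := by
      have hc2 : ContinuousAt (fun d : ℝ => d * (n : ℝ)) 0 := by fun_prop
      have hc2' : Tendsto (fun d : ℝ => d * (n : ℝ)) (nhds 0) (nhds ((0 : ℝ) * (n : ℝ))) := hc2
      refine hc2'.eventually_lt_const ?_
      norm_num
    have hlt3 : ∀ᶠ d in nhds (0 : ℝ), 0 < (1 - ((n : ℝ) - 1) * d : ℝ) := by
      have hc3 : Tendsto (fun d : ℝ => 1 - ((n : ℝ) - 1) * d) (nhds 0)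
          (nhds (1 - ((n : ℝ) - 1) * 0)) := h1
      refine hc3.eventually_const_lt ?_
      norm_num
    have hall := (hlt.and (hlt2.and hlt3)).filter_mono (nhdsWithin_le_nhds (s := Set.Ioi (0:ℝ)))
    have : ∃ δ ∈ Set.Ioi (0 : ℝ), ((1 - (n - 1) * δ : ℝ) ^ (-α) < 1 + ε / 2 ∧
        δ * n < 1 ∧ 0 < (1 - (n - 1) * δ : ℝ)) := by
      have hne : (nhdsWithin (0:ℝ) (Set.Ioi 0)).NeBot := nhdsGT_neBot 0
      exact (hall.and self_mem_nhdsWithin).exists.imp fun δ h => ⟨h.2, h.1⟩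
    obtain ⟨δ, hδpos, hδ1, hδ2, hδ3⟩ := this
    exact ⟨δ, hδpos, hδ2, hδ1, hδ3⟩
  obtain ⟨δ, hδpos, hδn, hδrpow, htpos⟩ := hδexists
  set t : ℝ := 1 - (n - 1) * δ with htdef
  -- eventual bounds
  have E1 : ∀ᶠ x in atTop, (∑ i, p i (t * x)) / D x < 1 + ε / 2 :=
    (hDratio t htpos).eventually_lt_const hδrpow
  have E2 : ∀ᶠ x in atTop,
      (∑ i, ∑ j, if i ≠ j then p i (δ * x) * p j (δ * x) else 0) / D x < ε / 2 :=
    (hcross δ hδpos).eventually_lt_const (by linarith)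
  have E3 : ∀ᶠ x in atTop,
      (∑ i, ∑ j, if i ≠ j then p i (1 * x) * p j (1 * x) else 0) / D x < ε / 2 :=
    (hcross 1 one_pos).eventually_lt_const (by linarith)
  filter_upwards [E1, E2, E3, eventually_gt_atTop (0 : ℝ)] with x h1 h2 h3 hx
  have hDx : 0 < D x := hDpos x hx
  set f : ℝ := (μ {ω | x < ∑ i, X i ω}).toReal / D x with hfdef
  -- Upper bound
  have hupper : f < 1 + ε := by
    have hincl := big_jump_incl' X hx hδn
    have hm1 : (μ {ω | x < ∑ i, X i ω}) ≤
        μ (⋃ i, {ω | t * x < X i ω}) +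
          μ (⋃ i, ⋃ j, ⋃ (_ : i ≠ j), ({ω | δ * x < X i ω} ∩ {ω | δ * x < X j ω})) :=
      le_trans (measure_mono hincl) (measure_union_le _ _)
    have hm2 : μ (⋃ i, {ω | t * x < X i ω}) ≤ ∑ i, μ {ω | t * x < X i ω} :=
      measure_iUnion_fintype_le _ _
    have hm3 : μ (⋃ i, ⋃ j, ⋃ (_ : i ≠ j), ({ω | δ * x < X i ω} ∩ {ω | δ * x < X j ω}))
        ≤ ∑ i, ∑ j, (if i ≠ j then μ ({ω | δ * x < X i ω} ∩ {ω | δ * x < X j ω}) else 0) := by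
      refine le_trans (measure_iUnion_fintype_le _ _) (Finset.sum_le_sum fun i _ => ?_)
      refine le_trans (measure_iUnion_fintype_le _ _) (Finset.sum_le_sum fun j _ => ?_)
      by_cases hij : i ≠ j
      · simp [hij]
      · simp [hij]
    have htotne : (∑ i, μ {ω | t * x < X i ω}
        + ∑ i, ∑ j, (if i ≠ j then μ ({ω | δ * x < X i ω} ∩ {ω | δ * x < X j ω}) else 0)) ≠ ⊤ := by
      refine ENNReal.add_ne_top.2 ⟨?_, ?_⟩
      · exact (ENNReal.sum_lt_top.2 fun i _ => measure_lt_top μ _).ne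
      · refine (ENNReal.sum_lt_top.2 fun i _ => (ENNReal.sum_lt_top.2 fun j _ => ?_)).ne
        split
        · exact measure_lt_top μ _
        · simp
    have hnum : (μ {ω | x < ∑ i, X i ω}).toReal ≤
        (∑ i, p i (t * x)) + ∑ i, ∑ j, if i ≠ j then p i (δ * x) * p j (δ * x) else 0 := by
      have hle := le_trans hm1 (add_le_add hm2 hm3)
      have := ENNReal.toReal_mono htotne hle
      refine le_trans this (le_of_eq ?_)
      rw [ENNReal.toReal_add (ENNReal.sum_lt_top.2 fun i _ => measure_lt_top μ _).ne
        (by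
          refine (ENNReal.sum_lt_top.2 fun i _ => (ENNReal.sum_lt_top.2 fun j _ => ?_)).ne
          split
          · exact measure_lt_top μ _
          · simp)]
      congr 1
      · rw [ENNReal.toReal_sum (fun i _ => measure_ne_top _ _)]
      · rw [ENNReal.toReal_sum (fun i _ => by
          refine (ENNReal.sum_lt_top.2 fun j _ => ?_).ne
          split
          · exact measure_lt_top μ _
          · simp)]
        refine Finset.sum_congr rfl fun i _ => ?_
        rw [ENNReal.toReal_sum (fun j _ => by
          split
          · exact measure_ne_top _ _
          · simp)]
        refine Finset.sum_congr rfl fun j _ => ?_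
        split
        · next hij => rw [hpairind i j hij]
        · simp
    have : f ≤ ((∑ i, p i (t * x))
        + ∑ i, ∑ j, if i ≠ j then p i (δ * x) * p j (δ * x) else 0) / D x := by
      rw [hfdef]
      gcongr
    rw [add_div] at this
    calc f ≤ _ := this
      _ < (1 + ε / 2) + ε / 2 := add_lt_add h1 h2
      _ = 1 + ε := by ring
  -- Lower bound
  have hlower : 1 - ε < f := by
    have hsubset : (⋃ i, {ω | x < X i ω}) ⊆ {ω | x < ∑ i, X i ω} := by
      intro ω hω
      simp only [Set.mem_iUnion, Set.mem_setOf_eq] at hω ⊢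
      obtain ⟨i, hi⟩ := hω
      exact lt_of_lt_of_le hi (Finset.single_le_sum (fun j _ => hXnn j ω) (Finset.mem_univ i))
    have hbon := bonferroni_aux' μ (fun i => {ω | x < X i ω}) (fun i => hmeas i x)
      (Finset.univ : Finset (Fin n))
    have hUeq : (⋃ i ∈ (Finset.univ : Finset (Fin n)), {ω | x < X i ω})
        = ⋃ i, {ω | x < X i ω} := by
      simp
    rw [hUeq] at hbon
    have hbon2 : D x - (∑ i, ∑ j, if i ≠ j then p i x * p j x else 0)
        ≤ (μ (⋃ i, {ω | x < X i ω})).toReal := by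
      refine le_trans (le_of_eq ?_) hbon
      congr 1
      refine Finset.sum_congr rfl fun i _ => Finset.sum_congr rfl fun j _ => ?_
      split
      · next hij => rw [hpairind i j hij]
      · rfl
    have hmono : (μ (⋃ i, {ω | x < X i ω})).toReal ≤ (μ {ω | x < ∑ i, X i ω}).toReal :=
      ENNReal.toReal_mono (measure_ne_top μ _) (measure_mono hsubset)
    have hnum : D x - (∑ i, ∑ j, if i ≠ j then p i x * p j x else 0)
        ≤ (μ {ω | x < ∑ i, X i ω}).toReal := le_trans hbon2 hmono
    have hdiv : (D x - (∑ i, ∑ j, if i ≠ j then p i x * p j x else 0)) / D x ≤ f := by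
      rw [hfdef]; gcongr
    rw [sub_div, div_self hDx.ne'] at hdiv
    have h3' : (∑ i, ∑ j, if i ≠ j then p i x * p j x else 0) / D x < ε / 2 := by
      have : (∑ i, ∑ j, if i ≠ j then p i (1 * x) * p j (1 * x) else 0) =
          (∑ i, ∑ j, if i ≠ j then p i x * p j x else 0) := by
        simp [one_mul]
      rw [this] at h3
      exact h3
    calc 1 - ε < 1 - ε / 2 := by linarith
      _ ≤ 1 - (∑ i, ∑ j, if i ≠ j then p i x * p j x else 0) / D x := by linarith
      _ ≤ f := hdiv
  rw [Real.dist_eq, abs_lt]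
  constructor <;> [linarith; linarith]
end

section
/- Let X₁, X₂ be independent nonnegative random variables with X₁ regularly varying of index α ≥ 0, and suppose P[X₂ > x] = o(P[X₁ > x]) as x → ∞. Then P[X₁ + X₂ > x] ∼ P[X₁ > x] as x → ∞. -/
open MeasureTheory Filter

lemma key_rv {Ω : Type*} [MeasurableSpace Ω] (μ : Measure Ω)
    (X₁ : Ω → ℝ) (α : ℝ) (L : ℝ → ℝ) (hL : SlowlyVarying L)
    (hT₁ : ∀ x : ℝ, 0 < x → (μ {ω | x < X₁ ω}).toReal = x ^ (-α) * L x)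
    (hpos₁ : ∀ x : ℝ, 0 < x → 0 < (μ {ω | x < X₁ ω}).toReal)
    (t : ℝ) (ht : 0 < t) :
    Tendsto (fun x => (μ {ω | t * x < X₁ ω}).toReal / (μ {ω | x < X₁ ω}).toReal)
      atTop (nhds (t ^ (-α))) := by
  have h1 : Tendsto (fun x => t ^ (-α) * (L (t * x) / L x)) atTop (nhds (t ^ (-α))) := by
    have := (hL t ht).const_mul (t ^ (-α))
    simpa using this
  refine h1.congr' ?_
  filter_upwards [eventually_gt_atTop (0:ℝ)] with x hx
  have htx : 0 < t * x := mul_pos ht hx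
  have hLx : 0 < L x := by
    have := hpos₁ x hx
    rw [hT₁ x hx] at this
    nlinarith [Real.rpow_pos_of_pos hx (-α)]
  rw [hT₁ _ htx, hT₁ x hx, Real.mul_rpow ht.le hx.le]
  have hx0 : x ^ (-α) ≠ 0 := (Real.rpow_pos_of_pos hx (-α)).ne'
  field_simp

/-- If `X₁, X₂` are independent nonnegative random variables, `X₁` regularly varying
of index `α ≥ 0`, and `P[X₂ > x] = o(P[X₁ > x])` as `x → ∞`, then
`P[X₁ + X₂ > x] ∼ P[X₁ > x]` as `x → ∞`. -/
theorem tail_add_of_little_o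
    {Ω : Type*} [MeasurableSpace Ω] (μ : Measure Ω) [IsProbabilityMeasure μ]
    (X₁ X₂ : Ω → ℝ) (hX₁m : Measurable X₁) (hX₂m : Measurable X₂)
    (hX₁nn : ∀ ω, 0 ≤ X₁ ω) (hX₂nn : ∀ ω, 0 ≤ X₂ ω)
    (hindep : ProbabilityTheory.IndepFun X₁ X₂ μ)
    (α : ℝ) (hα : 0 ≤ α) (L : ℝ → ℝ) (hL : SlowlyVarying L)
    (hT₁ : ∀ x : ℝ, 0 < x → (μ {ω | x < X₁ ω}).toReal = x ^ (-α) * L x)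
    (hpos₁ : ∀ x : ℝ, 0 < x → 0 < (μ {ω | x < X₁ ω}).toReal)
    (hsmall : Tendsto (fun x : ℝ =>
        (μ {ω | x < X₂ ω}).toReal / (μ {ω | x < X₁ ω}).toReal) atTop (nhds 0)) :
    Tendsto (fun x : ℝ =>
        (μ {ω | x < X₁ ω + X₂ ω}).toReal / (μ {ω | x < X₁ ω}).toReal)
      atTop (nhds 1) := by
  rw [Metric.tendsto_nhds]
  intro ε hε
  -- choose δ ∈ (0,1) with (1-δ)^(-α) < 1 + ε/2
  have hcont : Tendsto (fun δ : ℝ => (1 - δ) ^ (-α)) (nhds 0) (nhds 1) := by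
    have h1 : ContinuousAt (fun s : ℝ => s ^ (-α)) 1 :=
      Real.continuousAt_rpow_const 1 (-α) (Or.inl one_ne_zero)
    have h2 : Tendsto (fun δ : ℝ => 1 - δ) (nhds 0) (nhds 1) := by
      exact (continuous_const.sub continuous_id).tendsto' (0:ℝ) 1 (by norm_num)
    simpa [Function.comp_def] using (h1.tendsto.comp h2)
  obtain ⟨δ, hδlt, hδ0, hδ1⟩ :
      ∃ δ : ℝ, (1 - δ) ^ (-α) < 1 + ε/2 ∧ 0 < δ ∧ δ < 1 := by
    have h3 : ∀ᶠ δ in nhdsWithin (0:ℝ) (Set.Ioi 0),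
        (1 - δ) ^ (-α) < 1 + ε/2 ∧ 0 < δ ∧ δ < 1 := by
      have ha : ∀ᶠ δ in nhds (0:ℝ), (1 - δ) ^ (-α) < 1 + ε/2 :=
        hcont.eventually_lt_const (by linarith)
      have hb : ∀ᶠ δ in nhds (0:ℝ), δ < 1 :=
        Filter.Tendsto.eventually_lt_const zero_lt_one tendsto_id
      filter_upwards [nhdsWithin_le_nhds ha, nhdsWithin_le_nhds hb,
        self_mem_nhdsWithin] with δ h1 h2 h3
      exact ⟨h1, h3, h2⟩
    exact h3.exists
  have h1δ : 0 < 1 - δ := by linarith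
  -- limits
  have hkey1 := key_rv μ X₁ α L hL hT₁ hpos₁ (1 - δ) h1δ
  have hkeyδ := key_rv μ X₁ α L hL hT₁ hpos₁ δ hδ0
  have htδ : Tendsto (fun x : ℝ => δ * x) atTop atTop :=
    Tendsto.const_mul_atTop hδ0 tendsto_id
  have hsmall2 : Tendsto (fun x : ℝ =>
      (μ {ω | δ * x < X₂ ω}).toReal / (μ {ω | x < X₁ ω}).toReal) atTop (nhds 0) := by
    have hprod : Tendsto (fun x : ℝ =>
        ((μ {ω | δ * x < X₂ ω}).toReal / (μ {ω | δ * x < X₁ ω}).toReal) *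
        ((μ {ω | δ * x < X₁ ω}).toReal / (μ {ω | x < X₁ ω}).toReal))
        atTop (nhds (0 * δ ^ (-α))) :=
      (hsmall.comp htδ).mul hkeyδ
    rw [zero_mul] at hprod
    refine hprod.congr' ?_
    filter_upwards [eventually_gt_atTop (0:ℝ)] with x hx
    have hb : (μ {ω | δ * x < X₁ ω}).toReal ≠ 0 := (hpos₁ _ (mul_pos hδ0 hx)).ne'
    rw [div_mul_div_comm, mul_comm ((μ {ω | δ * x < X₁ ω}).toReal), mul_div_mul_right _ _ hb]
  have hg : Tendsto (fun x : ℝ =>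
      (μ {ω | (1 - δ) * x < X₁ ω}).toReal / (μ {ω | x < X₁ ω}).toReal +
      (μ {ω | δ * x < X₂ ω}).toReal / (μ {ω | x < X₁ ω}).toReal)
      atTop (nhds ((1 - δ) ^ (-α) + 0)) := hkey1.add hsmall2
  rw [add_zero] at hg
  have hglt : ∀ᶠ x in atTop,
      (μ {ω | (1 - δ) * x < X₁ ω}).toReal / (μ {ω | x < X₁ ω}).toReal +
      (μ {ω | δ * x < X₂ ω}).toReal / (μ {ω | x < X₁ ω}).toReal < 1 + ε :=
    hg.eventually_lt_const (by linarith)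
  filter_upwards [hglt, eventually_gt_atTop (0:ℝ)] with x hgx hx
  have hden := hpos₁ x hx
  -- lower bound: 1 ≤ ratio
  have hsub : {ω | x < X₁ ω} ⊆ {ω | x < X₁ ω + X₂ ω} := fun ω hω => by
    have := hX₂nn ω
    simp only [Set.mem_setOf_eq] at *
    linarith
  have hlow : (μ {ω | x < X₁ ω}).toReal ≤ (μ {ω | x < X₁ ω + X₂ ω}).toReal :=
    ENNReal.toReal_mono (measure_ne_top μ _) (measure_mono hsub)
  have h1le : 1 ≤ (μ {ω | x < X₁ ω + X₂ ω}).toReal / (μ {ω | x < X₁ ω}).toReal :=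
    (one_le_div hden).2 hlow
  -- upper bound
  have hsub2 : {ω | x < X₁ ω + X₂ ω} ⊆
      {ω | (1 - δ) * x < X₁ ω} ∪ {ω | δ * x < X₂ ω} := fun ω hω => by
    simp only [Set.mem_setOf_eq, Set.mem_union] at *
    by_contra h
    push_neg at h
    nlinarith [h.1, h.2]
  have hup : (μ {ω | x < X₁ ω + X₂ ω}).toReal ≤
      (μ {ω | (1 - δ) * x < X₁ ω}).toReal + (μ {ω | δ * x < X₂ ω}).toReal := by
    have h1 : μ {ω | x < X₁ ω + X₂ ω} ≤
        μ {ω | (1 - δ) * x < X₁ ω} + μ {ω | δ * x < X₂ ω} :=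
      le_trans (measure_mono hsub2) (measure_union_le _ _)
    have h2 := ENNReal.toReal_mono
      (ENNReal.add_ne_top.2 ⟨measure_ne_top μ _, measure_ne_top μ _⟩) h1
    rwa [ENNReal.toReal_add (measure_ne_top μ _) (measure_ne_top μ _)] at h2
  have hupd : (μ {ω | x < X₁ ω + X₂ ω}).toReal / (μ {ω | x < X₁ ω}).toReal ≤
      (μ {ω | (1 - δ) * x < X₁ ω}).toReal / (μ {ω | x < X₁ ω}).toReal +
      (μ {ω | δ * x < X₂ ω}).toReal / (μ {ω | x < X₁ ω}).toReal := by
    rw [← add_div]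
    exact (div_le_div_iff_of_pos_right hden).2 hup |>.trans_eq rfl
  rw [Real.dist_eq, abs_lt]
  constructor <;> [linarith; linarith]
end

section
/- Let (Aₙ, Bₙ) be an i.i.d. sequence of pairs of real random variables with P[A = 0] = 0, E[log|A|] < 0 and E[log⁺|B|] < ∞. Then the infinite random series Z := Σ_{k≥1} (∏_{i=1}^{k−1} Aᵢ) B_k converges almost surely, and its law is a solution of the fixed-point distributional equation Z =ᵈ A Z + B with Z independent of (A,B). -/
open MeasureTheory Filter ProbabilityTheory Topology

lemma measurable_tsum_real {α : Type*} [MeasurableSpace α] {t : ℕ → α → ℝ}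
    (ht : ∀ k, Measurable (t k)) : Measurable (fun x => ∑' k, t k x) := by
  classical
  set C : Set α := {x | Summable fun k => t k x} with hCdef
  have hCeq : C = ⋃ M : ℕ, ⋂ n : ℕ, {x | ∑ k ∈ Finset.range n, |t k x| ≤ (M : ℝ)} := by
    ext x
    simp only [hCdef, Set.mem_setOf_eq, Set.mem_iUnion, Set.mem_iInter]
    constructor
    · intro hs
      refine ⟨⌈∑' k, |t k x|⌉₊, fun n => ?_⟩
      exact le_trans (Summable.sum_le_tsum _ (fun _ _ => abs_nonneg _) hs.abs) (Nat.le_ceil _)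
    · rintro ⟨M, hM⟩
      exact (summable_of_sum_range_le (fun n => abs_nonneg _) hM).of_abs
  have hCm : MeasurableSet C := by
    rw [hCeq]
    refine MeasurableSet.iUnion fun M => MeasurableSet.iInter fun n => ?_
    exact measurableSet_le (Finset.measurable_sum _ fun k _ => (ht k).abs) measurable_const
  have key : (fun x => ∑' k, t k x) = C.piecewise (fun x => ∑' k, t k x) (fun _ => 0) := by
    ext x
    by_cases hx : x ∈ C
    · rw [Set.piecewise_eq_of_mem _ _ _ hx]
    · rw [Set.piecewise_eq_of_notMem _ _ _ hx, tsum_eq_zero_of_not_summable hx]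
  rw [key]
  refine measurable_of_tendsto_metrizable
    (f := fun n => C.piecewise (fun x => ∑ k ∈ Finset.range n, t k x) (fun _ => (0:ℝ)))
    (fun n => Measurable.piecewise hCm (Finset.measurable_sum _ fun k _ => ht k)
      measurable_const) ?_
  rw [tendsto_pi_nhds]
  intro x
  by_cases hx : x ∈ C
  · simp only [Set.piecewise_eq_of_mem _ _ _ hx]
    exact hx.hasSum.tendsto_sum_nat
  · simp only [Set.piecewise_eq_of_notMem _ _ _ hx]
    exact tendsto_const_nhds

lemma tendsto_div_self_of_cesaro {u : ℕ → ℝ} {c : ℝ}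
    (h : Tendsto (fun n : ℕ => (∑ i ∈ Finset.range n, u i) / n) atTop (𝓝 c)) :
    Tendsto (fun n : ℕ => u n / n) atTop (𝓝 0) := by
  have h2 : Tendsto (fun n : ℕ => ((n : ℝ) + 1) / n) atTop (𝓝 1) := by
    have := (tendsto_const_nhds (α := ℕ) (f := atTop) (x := (1:ℝ))).add
      tendsto_one_div_atTop_nhds_zero_nat
    rw [add_zero] at this
    refine this.congr' ?_
    filter_upwards [eventually_ge_atTop 1] with n hn
    have hn0 : (n : ℝ) ≠ 0 := by positivity
    field_simp
  have h1 : Tendsto (fun n : ℕ =>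
      (∑ i ∈ Finset.range (n + 1), u i) / (n + 1) * (((n : ℝ) + 1) / n)
        - (∑ i ∈ Finset.range n, u i) / n) atTop (𝓝 (c * 1 - c)) := by
    have hcomp : Tendsto (fun n : ℕ => (∑ i ∈ Finset.range (n + 1), u i) / ((n : ℝ) + 1))
        atTop (𝓝 c) := by
      refine (h.comp (tendsto_add_atTop_nat 1)).congr fun n => ?_
      simp [Function.comp]
    exact (hcomp.mul h2).sub h
  rw [mul_one, sub_self] at h1
  refine h1.congr' ?_
  filter_upwards [eventually_ge_atTop 1] with n hn
  have hn0 : (n : ℝ) ≠ 0 := by positivity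
  have hn1 : (n : ℝ) + 1 ≠ 0 := by positivity
  rw [Finset.sum_range_succ]
  field_simp
  ring

lemma prefix_map_eq {Ω : Type*} [MeasurableSpace Ω] (μ : Measure Ω) [IsProbabilityMeasure μ]
    (X : ℕ → Ω → ℝ × ℝ) (hXm : ∀ n, Measurable (X n))
    (hindep : iIndepFun X μ)
    (hident : ∀ n, IdentDistrib (X n) (X 0) μ μ) :
    ∀ n : ℕ, μ.map (fun ω (i : Fin n) => X ((i : ℕ) + 1) ω)
      = μ.map (fun ω (i : Fin n) => X (i : ℕ) ω) := by
  intro n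
  induction n with
  | zero =>
    have h1 : Measurable (fun ω (i : Fin 0) => X ((i : ℕ) + 1) ω) :=
      measurable_pi_lambda _ fun i => hXm _
    have h2 : Measurable (fun ω (i : Fin 0) => X (i : ℕ) ω) :=
      measurable_pi_lambda _ fun i => hXm _
    haveI i1 : IsProbabilityMeasure (μ.map (fun ω (i : Fin 0) => X ((i : ℕ) + 1) ω)) :=
      Measure.isProbabilityMeasure_map h1.aemeasurable
    haveI i2 : IsProbabilityMeasure (μ.map (fun ω (i : Fin 0) => X (i : ℕ) ω)) :=
      Measure.isProbabilityMeasure_map h2.aemeasurable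
    refine Measure.ext fun s hs => ?_
    rcases s.eq_empty_or_nonempty with rfl | ⟨a, ha⟩
    · simp
    · have hsu : s = Set.univ := Set.eq_univ_of_forall fun b => by
        rwa [Subsingleton.elim b a]
      rw [hsu]
      simp [measure_univ]
  | succ n ih =>
    have hPm : Measurable (fun ω (i : Fin n) => X (i : ℕ) ω) :=
      measurable_pi_lambda _ fun i => hXm _
    have hQm : Measurable (fun ω (i : Fin n) => X ((i : ℕ) + 1) ω) :=
      measurable_pi_lambda _ fun i => hXm _
    -- independence of prefix and next element
    have h₁ : IndepFun (fun ω (i : Fin n) => X (i : ℕ) ω) (X n) μ := by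
      have h := hindep.indepFun_finset (Finset.range n) {n}
        (by simp [Finset.disjoint_left]; omega) hXm
      have hφ₁ : Measurable (fun (y : ↥(Finset.range n) → ℝ × ℝ) (i : Fin n) =>
          y ⟨(i : ℕ), Finset.mem_range.2 i.isLt⟩) :=
        measurable_pi_lambda _ fun i => measurable_pi_apply _
      have hφ₂ : Measurable (fun (y : ↥({n} : Finset ℕ) → ℝ × ℝ) =>
          y ⟨n, Finset.mem_singleton_self n⟩) := measurable_pi_apply _
      exact h.comp hφ₁ hφ₂
    have h₂ : IndepFun (fun ω (i : Fin n) => X ((i : ℕ) + 1) ω) (X (n + 1)) μ := by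
      have h := hindep.indepFun_finset (Finset.Ico 1 (n + 1)) {n + 1}
        (by simp [Finset.disjoint_left]; omega) hXm
      have hφ₁ : Measurable (fun (y : ↥(Finset.Ico 1 (n + 1)) → ℝ × ℝ) (i : Fin n) =>
          y ⟨(i : ℕ) + 1, Finset.mem_Ico.2 (by omega)⟩) :=
        measurable_pi_lambda _ fun i => measurable_pi_apply _
      have hφ₂ : Measurable (fun (y : ↥({n + 1} : Finset ℕ) → ℝ × ℝ) =>
          y ⟨n + 1, Finset.mem_singleton_self _⟩) := measurable_pi_apply _
      exact h.comp hφ₁ hφ₂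
    have e₁ := (indepFun_iff_map_prod_eq_prod_map_map hPm.aemeasurable
      (hXm n).aemeasurable).mp h₁
    have e₂ := (indepFun_iff_map_prod_eq_prod_map_map hQm.aemeasurable
      (hXm (n + 1)).aemeasurable).mp h₂
    have hsnoc : Measurable (fun p : (Fin n → ℝ × ℝ) × (ℝ × ℝ) =>
        (Fin.snoc p.1 p.2 : Fin (n + 1) → ℝ × ℝ)) := by
      apply measurable_pi_lambda
      intro i
      refine Fin.lastCases ?_ ?_ i
      · simpa [Fin.snoc_last] using measurable_snd
      · intro j
        simpa [Fin.snoc_castSucc] using (show Measurable fun c : (Fin n → ℝ × ℝ) × (ℝ × ℝ) => c.1 j from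
            (measurable_pi_apply j).comp measurable_fst)
    have hPsucc : (fun ω (i : Fin (n + 1)) => X (i : ℕ) ω)
        = (fun p : (Fin n → ℝ × ℝ) × (ℝ × ℝ) => (Fin.snoc p.1 p.2 : Fin (n + 1) → ℝ × ℝ))
          ∘ (fun ω => (fun i : Fin n => X (i : ℕ) ω, X n ω)) := by
      funext ω
      refine funext ?_
      refine Fin.lastCases ?_ ?_
      · simp [Fin.snoc_last]
      · intro j
        simp [Fin.snoc_castSucc]
    have hQsucc : (fun ω (i : Fin (n + 1)) => X ((i : ℕ) + 1) ω)
        = (fun p : (Fin n → ℝ × ℝ) × (ℝ × ℝ) => (Fin.snoc p.1 p.2 : Fin (n + 1) → ℝ × ℝ))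
          ∘ (fun ω => (fun i : Fin n => X ((i : ℕ) + 1) ω, X (n + 1) ω)) := by
      funext ω
      refine funext ?_
      refine Fin.lastCases ?_ ?_
      · simp [Fin.snoc_last]
      · intro j
        simp [Fin.snoc_castSucc]
    calc μ.map (fun ω (i : Fin (n + 1)) => X ((i : ℕ) + 1) ω)
        = ((μ.map (fun ω (i : Fin n) => X ((i : ℕ) + 1) ω)).prod
            (μ.map (X (n + 1)))).map
            (fun p : (Fin n → ℝ × ℝ) × (ℝ × ℝ) => (Fin.snoc p.1 p.2 : Fin (n+1) → ℝ × ℝ)) := by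
          rw [hQsucc, ← Measure.map_map hsnoc (hQm.prodMk (hXm (n + 1))), e₂]
      _ = ((μ.map (fun ω (i : Fin n) => X (i : ℕ) ω)).prod (μ.map (X n))).map
            (fun p : (Fin n → ℝ × ℝ) × (ℝ × ℝ) => (Fin.snoc p.1 p.2 : Fin (n+1) → ℝ × ℝ)) := by
          rw [ih, (hident (n + 1)).map_eq, ← (hident n).map_eq]
      _ = μ.map (fun ω (i : Fin (n + 1)) => X (i : ℕ) ω) := by
          rw [hPsucc, ← Measure.map_map hsnoc (hPm.prodMk (hXm n)), e₁]

lemma seq_map_eq {Ω : Type*} [MeasurableSpace Ω] (μ : Measure Ω) [IsProbabilityMeasure μ]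
    (X : ℕ → Ω → ℝ × ℝ) (hXm : ∀ n, Measurable (X n))
    (hindep : iIndepFun X μ)
    (hident : ∀ n, IdentDistrib (X n) (X 0) μ μ) :
    μ.map (fun ω (n : ℕ) => X (n + 1) ω) = μ.map (fun ω (n : ℕ) => X n ω) := by
  have hSm : Measurable (fun ω (n : ℕ) => X n ω) := measurable_pi_lambda _ hXm
  have hS'm : Measurable (fun ω (n : ℕ) => X (n + 1) ω) :=
    measurable_pi_lambda _ fun n => hXm _
  haveI i1 : IsProbabilityMeasure (μ.map (fun ω (n : ℕ) => X (n + 1) ω)) :=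
    Measure.isProbabilityMeasure_map hS'm.aemeasurable
  haveI i2 : IsProbabilityMeasure (μ.map (fun ω (n : ℕ) => X n ω)) :=
    Measure.isProbabilityMeasure_map hSm.aemeasurable
  refine ext_of_generate_finite (measurableCylinders (fun _ : ℕ => ℝ × ℝ))
    generateFrom_measurableCylinders.symm isPiSystem_measurableCylinders ?_ (by simp)
  intro s hs
  rw [mem_measurableCylinders] at hs
  obtain ⟨t, T, hT, rfl⟩ := hs
  set N := t.sup id + 1 with hN
  have hlt : ∀ i : t, (i : ℕ) < N := fun i =>
    Nat.lt_succ_of_le (Finset.le_sup (f := id) i.2)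
  have hψ : Measurable (fun (y : Fin N → ℝ × ℝ) (i : t) => y ⟨(i : ℕ), hlt i⟩) :=
    measurable_pi_lambda _ fun i => measurable_pi_apply _
  have hQN : Measurable (fun ω (i : Fin N) => X ((i : ℕ) + 1) ω) :=
    measurable_pi_lambda _ fun i => hXm _
  have hPN : Measurable (fun ω (i : Fin N) => X (i : ℕ) ω) :=
    measurable_pi_lambda _ fun i => hXm _
  have hA : (fun ω (n : ℕ) => X (n + 1) ω) ⁻¹' cylinder t T
      = (fun ω (i : Fin N) => X ((i : ℕ) + 1) ω) ⁻¹'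
        ((fun (y : Fin N → ℝ × ℝ) (i : t) => y ⟨(i : ℕ), hlt i⟩) ⁻¹' T) := rfl
  have hB : (fun ω (n : ℕ) => X n ω) ⁻¹' cylinder t T
      = (fun ω (i : Fin N) => X (i : ℕ) ω) ⁻¹'
        ((fun (y : Fin N → ℝ × ℝ) (i : t) => y ⟨(i : ℕ), hlt i⟩) ⁻¹' T) := rfl
  rw [Measure.map_apply hS'm (hT.cylinder t), Measure.map_apply hSm (hT.cylinder t), hA, hB,
    ← Measure.map_apply hQN (hψ hT), ← Measure.map_apply hPN (hψ hT),
    prefix_map_eq μ X hXm hindep hident N]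


/-- Existence of the perpetuity: if `(Aₙ, Bₙ)` is an i.i.d. sequence with
`P[A = 0] = 0`, `E[log |A|] < 0` and `E[log⁺ |B|] < ∞`, then the series
`Z = Σ_k (∏_{i<k} Aᵢ) B_k` converges (absolutely) a.s., and its law solves
`Z =ᵈ A Z + B` with `Z` independent of `(A, B)`: the shifted perpetuity
`Z₁ = Σ_k (∏_{i<k} A_{i+1}) B_{k+1}` has the same law as `Z`, is independent of
`(A₀, B₀)`, and a.s. `Z = A₀ Z₁ + B₀`. -/
theorem perpetuity_exists
    {Ω : Type*} [MeasurableSpace Ω] (μ : Measure Ω) [IsProbabilityMeasure μ]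
    (A B : ℕ → Ω → ℝ)
    (hAm : ∀ n, Measurable (A n)) (hBm : ∀ n, Measurable (B n))
    (hindep : iIndepFun (fun n ω => (A n ω, B n ω)) μ)
    (hident : ∀ n, IdentDistrib (fun ω => (A n ω, B n ω)) (fun ω => (A 0 ω, B 0 ω)) μ μ)
    (hA0 : μ {ω | A 0 ω = 0} = 0)
    (hAint : Integrable (fun ω => Real.log |A 0 ω|) μ)
    (hAneg : ∫ ω, Real.log |A 0 ω| ∂μ < 0)
    (hBint : Integrable (fun ω => max (Real.log |B 0 ω|) 0) μ) :
    (∀ᵐ ω ∂μ, Summable (fun k : ℕ => |∏ i ∈ Finset.range k, A i ω| * |B k ω|)) ∧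
    IdentDistrib (fun ω => ∑' k : ℕ, (∏ i ∈ Finset.range k, A (i + 1) ω) * B (k + 1) ω)
      (fun ω => ∑' k : ℕ, (∏ i ∈ Finset.range k, A i ω) * B k ω) μ μ ∧
    IndepFun (fun ω => ∑' k : ℕ, (∏ i ∈ Finset.range k, A (i + 1) ω) * B (k + 1) ω)
      (fun ω => (A 0 ω, B 0 ω)) μ ∧
    (∀ᵐ ω ∂μ, (∑' k : ℕ, (∏ i ∈ Finset.range k, A i ω) * B k ω)
        = A 0 ω * (∑' k : ℕ, (∏ i ∈ Finset.range k, A (i + 1) ω) * B (k + 1) ω)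
          + B 0 ω) := by
  have hXm : ∀ n, Measurable (fun ω => (A n ω, B n ω)) := fun n => (hAm n).prodMk (hBm n)
  -- measurable projections
  have hφA : Measurable (fun p : ℝ × ℝ => Real.log |p.1|) :=
    Real.measurable_log.comp measurable_fst.abs
  have hφB : Measurable (fun p : ℝ × ℝ => max (Real.log |p.2|) 0) :=
    (Real.measurable_log.comp measurable_snd.abs).max measurable_const
  -- strong laws of large numbers
  have hLpair : Pairwise (Function.onFun (IndepFun · · μ) fun n ω => Real.log |A n ω|) := by
    intro i j hij
    exact (hindep.indepFun hij).comp hφA hφA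
  have hMpair : Pairwise (Function.onFun (IndepFun · · μ) fun n ω => max (Real.log |B n ω|) 0) := by
    intro i j hij
    exact (hindep.indepFun hij).comp hφB hφB
  have hSLLN_A' := strong_law_ae_real (fun n ω => Real.log |A n ω|) hAint hLpair
    (fun i => (hident i).comp hφA)
  have hSLLN_B' := strong_law_ae_real (fun n ω => max (Real.log |B n ω|) 0) hBint hMpair
    (fun i => (hident i).comp hφB)
  have hSLLN_A : ∀ᵐ ω ∂μ, Tendsto
      (fun n : ℕ => (∑ i ∈ Finset.range n, Real.log |A i ω|) / n) atTop
      (𝓝 (∫ ω, Real.log |A 0 ω| ∂μ)) := hSLLN_A'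
  have hSLLN_B : ∀ᵐ ω ∂μ, Tendsto
      (fun n : ℕ => (∑ i ∈ Finset.range n, max (Real.log |B i ω|) 0) / n) atTop
      (𝓝 (∫ ω, max (Real.log |B 0 ω|) 0 ∂μ)) := hSLLN_B'
  -- almost surely no A vanishes
  have hAne : ∀ᵐ ω ∂μ, ∀ i, A i ω ≠ 0 := by
    rw [ae_all_iff]
    intro i
    have hid : IdentDistrib (A i) (A 0) μ μ := (hident i).comp measurable_fst
    have : μ {ω | A i ω = 0} = 0 := by
      calc μ {ω | A i ω = 0} = μ.map (A i) {0} :=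
            (Measure.map_apply (hAm i) (measurableSet_singleton 0)).symm
        _ = μ.map (A 0) {0} := by rw [hid.map_eq]
        _ = μ {ω | A 0 ω = 0} := Measure.map_apply (hAm 0) (measurableSet_singleton 0)
        _ = 0 := hA0
    rw [ae_iff]
    simpa using this
  -- Part 1: almost sure summability
  have hsummable : ∀ᵐ ω ∂μ,
      Summable (fun k : ℕ => |∏ i ∈ Finset.range k, A i ω| * |B k ω|) := by
    filter_upwards [hSLLN_A, hSLLN_B, hAne] with ω hA' hB' hA0'
    set m := ∫ ω, Real.log |A 0 ω| ∂μ with hmdef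
    have hB0 : Tendsto (fun n : ℕ => (max (Real.log |B n ω|) 0) / n) atTop (𝓝 0) :=
      tendsto_div_self_of_cesaro hB'
    have h1 : ∀ᶠ k : ℕ in atTop,
        (∑ i ∈ Finset.range k, Real.log |A i ω|) / k < m / 2 :=
      (tendsto_order.1 hA').2 (m / 2) (by linarith)
    have h2 : ∀ᶠ k : ℕ in atTop, (max (Real.log |B k ω|) 0) / k < -(m / 4) :=
      (tendsto_order.1 hB0).2 (-(m / 4)) (by linarith)
    obtain ⟨N, hN⟩ := eventually_atTop.1 ((h1.and h2).and (eventually_ge_atTop 1))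
    set r := Real.exp (m / 4) with hrdef
    have hr0 : 0 < r := Real.exp_pos _
    have hr1 : r < 1 := Real.exp_lt_one_iff.2 (by linarith)
    have hbound : ∀ k, N ≤ k → |∏ i ∈ Finset.range k, A i ω| * |B k ω| ≤ r ^ k := by
      intro k hk
      obtain ⟨⟨hk1, hk2⟩, hk3⟩ := hN k hk
      have hk0 : (0 : ℝ) < k := by exact_mod_cast hk3
      rw [div_lt_iff₀ hk0] at hk1 hk2
      have hprod : |∏ i ∈ Finset.range k, A i ω|
          = Real.exp (∑ i ∈ Finset.range k, Real.log |A i ω|) := by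
        rw [Finset.abs_prod, Real.exp_sum]
        exact Finset.prod_congr rfl fun i _ => (Real.exp_log (abs_pos.2 (hA0' i))).symm
      have hBle : |B k ω| ≤ Real.exp (max (Real.log |B k ω|) 0) := by
        rcases eq_or_lt_of_le (abs_nonneg (B k ω)) with h | h
        · rw [← h]
          exact (Real.exp_pos _).le
        · calc |B k ω| = Real.exp (Real.log |B k ω|) := (Real.exp_log h).symm
            _ ≤ _ := Real.exp_le_exp.2 (le_max_left _ _)
      have hsum : (∑ i ∈ Finset.range k, Real.log |A i ω|) + max (Real.log |B k ω|) 0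
          ≤ (k : ℝ) * (m / 4) := by nlinarith
      calc |∏ i ∈ Finset.range k, A i ω| * |B k ω|
          ≤ Real.exp (∑ i ∈ Finset.range k, Real.log |A i ω|)
            * Real.exp (max (Real.log |B k ω|) 0) := by
            rw [hprod]
            exact mul_le_mul_of_nonneg_left hBle (Real.exp_nonneg _)
        _ = Real.exp ((∑ i ∈ Finset.range k, Real.log |A i ω|)
            + max (Real.log |B k ω|) 0) := (Real.exp_add _ _).symm
        _ ≤ Real.exp ((k : ℝ) * (m / 4)) := Real.exp_le_exp.2 hsum
        _ = r ^ k := by rw [← Real.exp_nat_mul]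
    rw [← summable_nat_add_iff N]
    refine Summable.of_nonneg_of_le
      (fun k => mul_nonneg (abs_nonneg _) (abs_nonneg _))
      (fun k => hbound (k + N) (Nat.le_add_left _ _)) ?_
    simpa [pow_add] using (summable_geometric_of_lt_one hr0.le hr1).mul_right (r ^ N)
  -- a.e. nonvanishing of A 0
  have hA0ae : ∀ᵐ ω ∂μ, A 0 ω ≠ 0 := by
    rw [ae_iff]
    simpa using hA0
  -- Part 4: the fixed point equation
  have hpart4 : ∀ᵐ ω ∂μ, (∑' k : ℕ, (∏ i ∈ Finset.range k, A i ω) * B k ω)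
      = A 0 ω * (∑' k : ℕ, (∏ i ∈ Finset.range k, A (i + 1) ω) * B (k + 1) ω) + B 0 ω := by
    filter_upwards [hsummable, hA0ae] with ω hsum h0
    have hf : Summable (fun k : ℕ => (∏ i ∈ Finset.range k, A i ω) * B k ω) := by
      refine Summable.of_abs ?_
      simpa [abs_mul] using hsum
    have hfshift : Summable (fun k : ℕ => (∏ i ∈ Finset.range (k + 1), A i ω) * B (k + 1) ω) :=
      (summable_nat_add_iff 1).2 hf
    have key : ∀ k : ℕ, (∏ i ∈ Finset.range (k + 1), A i ω) * B (k + 1) ω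
        = A 0 ω * ((∏ i ∈ Finset.range k, A (i + 1) ω) * B (k + 1) ω) := by
      intro k
      rw [Finset.prod_range_succ']
      ring
    have hg : Summable (fun k : ℕ => (∏ i ∈ Finset.range k, A (i + 1) ω) * B (k + 1) ω) := by
      simp only [key] at hfshift
      have h2 := hfshift.mul_left (A 0 ω)⁻¹
      simpa [← mul_assoc, inv_mul_cancel₀ h0] using h2
    have hzero : (∏ i ∈ Finset.range 0, A i ω) * B 0 ω = B 0 ω := by simp
    calc (∑' k : ℕ, (∏ i ∈ Finset.range k, A i ω) * B k ω)
        = (∏ i ∈ Finset.range 0, A i ω) * B 0 ω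
          + ∑' k : ℕ, (∏ i ∈ Finset.range (k + 1), A i ω) * B (k + 1) ω :=
          Summable.tsum_eq_zero_add hf
      _ = B 0 ω + A 0 ω * ∑' k : ℕ, (∏ i ∈ Finset.range k, A (i + 1) ω) * B (k + 1) ω := by
          rw [hzero, tsum_congr key, tsum_mul_left]
      _ = A 0 ω * (∑' k : ℕ, (∏ i ∈ Finset.range k, A (i + 1) ω) * B (k + 1) ω) + B 0 ω := by
          ring
  -- measurability of the series as a function on path space
  have hgm : Measurable (fun x : ℕ → ℝ × ℝ =>
      ∑' k : ℕ, (∏ i ∈ Finset.range k, (x i).1) * (x k).2) :=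
    measurable_tsum_real fun k =>
      (Finset.measurable_prod _ fun i _ => (measurable_pi_apply i).fst).mul
        ((measurable_pi_apply k).snd)
  have hSm : Measurable (fun ω (n : ℕ) => (A n ω, B n ω)) :=
    measurable_pi_lambda _ fun n => hXm n
  have hS'm : Measurable (fun ω (n : ℕ) => (A (n + 1) ω, B (n + 1) ω)) :=
    measurable_pi_lambda _ fun n => hXm (n + 1)
  have hZm : Measurable (fun ω => ∑' k : ℕ, (∏ i ∈ Finset.range k, A i ω) * B k ω) :=
    hgm.comp hSm
  have hZ1m : Measurable
      (fun ω => ∑' k : ℕ, (∏ i ∈ Finset.range k, A (i + 1) ω) * B (k + 1) ω) :=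
    hgm.comp hS'm
  -- Part 2: equality in distribution
  have hmapseq := seq_map_eq μ (fun n ω => (A n ω, B n ω)) hXm hindep hident
  have hmap_eq : μ.map (fun ω => ∑' k : ℕ, (∏ i ∈ Finset.range k, A (i + 1) ω) * B (k + 1) ω)
      = μ.map (fun ω => ∑' k : ℕ, (∏ i ∈ Finset.range k, A i ω) * B k ω) := by
    calc μ.map (fun ω => ∑' k : ℕ, (∏ i ∈ Finset.range k, A (i + 1) ω) * B (k + 1) ω)
        = (μ.map (fun ω (n : ℕ) => (A (n + 1) ω, B (n + 1) ω))).map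
            (fun x : ℕ → ℝ × ℝ => ∑' k : ℕ, (∏ i ∈ Finset.range k, (x i).1) * (x k).2) :=
          (Measure.map_map hgm hS'm).symm
      _ = (μ.map (fun ω (n : ℕ) => (A n ω, B n ω))).map
            (fun x : ℕ → ℝ × ℝ => ∑' k : ℕ, (∏ i ∈ Finset.range k, (x i).1) * (x k).2) := by
          rw [hmapseq]
      _ = μ.map (fun ω => ∑' k : ℕ, (∏ i ∈ Finset.range k, A i ω) * B k ω) :=
          Measure.map_map hgm hSm
  -- Part 3: independence
  have hindep' : iIndep
      (fun n => MeasurableSpace.comap (fun ω => (A n ω, B n ω)) inferInstance) μ :=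
    (iIndepFun_iff_iIndep _ _ _).mp hindep
  have hle : ∀ n, MeasurableSpace.comap (fun ω => (A n ω, B n ω)) inferInstance
      ≤ (inferInstance : MeasurableSpace Ω) := fun n => (hXm n).comap_le
  have hbase := indep_biSup_compl hle hindep' (({0} : Set ℕ)ᶜ)
  have hright : (⨆ n ∈ (({0} : Set ℕ)ᶜ)ᶜ,
        MeasurableSpace.comap (fun ω => (A n ω, B n ω)) inferInstance)
      = MeasurableSpace.comap (fun ω => (A 0 ω, B 0 ω)) inferInstance := by
    rw [compl_compl]
    simp
  rw [hright] at hbase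
  have hZ1m' : Measurable[⨆ n ∈ ({0} : Set ℕ)ᶜ,
      MeasurableSpace.comap (fun ω => (A n ω, B n ω)) inferInstance]
      (fun ω => ∑' k : ℕ, (∏ i ∈ Finset.range k, A (i + 1) ω) * B (k + 1) ω) := by
    have hS'' : Measurable[⨆ n ∈ ({0} : Set ℕ)ᶜ,
        MeasurableSpace.comap (fun ω => (A n ω, B n ω)) inferInstance]
        (fun ω (n : ℕ) => (A (n + 1) ω, B (n + 1) ω)) := by
      refine @measurable_pi_iff Ω ℕ (fun _ => ℝ × ℝ)
        (⨆ n ∈ ({0} : Set ℕ)ᶜ, MeasurableSpace.comap (fun ω => (A n ω, B n ω)) inferInstance)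
        _ _ |>.mpr fun n => ?_
      have h1 : Measurable[MeasurableSpace.comap (fun ω => (A (n + 1) ω, B (n + 1) ω))
          inferInstance] (fun ω => (A (n + 1) ω, B (n + 1) ω)) :=
        measurable_iff_comap_le.2 le_rfl
      exact h1.mono (le_biSup
        (fun k : ℕ => MeasurableSpace.comap (fun ω => (A k ω, B k ω)) inferInstance)
        (show (n + 1) ∈ ({0} : Set ℕ)ᶜ by simp)) le_rfl
    exact hgm.comp hS''
  have hpart3 : Indep
      (MeasurableSpace.comap
        (fun ω => ∑' k : ℕ, (∏ i ∈ Finset.range k, A (i + 1) ω) * B (k + 1) ω) inferInstance)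
      (MeasurableSpace.comap (fun ω => (A 0 ω, B 0 ω)) inferInstance) μ :=
    indep_of_indep_of_le_left hbase (measurable_iff_comap_le.1 hZ1m')
  exact ⟨hsummable, ⟨hZ1m.aemeasurable, hZm.aemeasurable, hmap_eq⟩, hpart3, hpart4⟩
end
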